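/- Let P ⊂ ℝ² be an open bounded convex set with metric d = ∑_i w_i d_{θ_i} (the weighted sum of strip cross-ratio pseudo-metrics over a dense set of directions containing all directions of the sides of P, with ∑ w_i < ∞). If x, y, z ∈ P are not collinear, then d(x,y) < d(x,z) + d(z,y). In particular, the Euclidean segment is the unique d-geodesic between any two points of P. -/

import Mathlib

/-- Projection of a point of the plane onto the direction `(cos θ, sin θ)`. -/
noncomputable def projDir (θ : ℝ) (p : ℝ × ℝ) : ℝ := p.1 * Real.cos θ + p.2 * Real.sin θ

/-- Lower bound of the minimal strip containing `P` in direction `θ`. -/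
noncomputable def stripXi (θ : ℝ) (P : Set (ℝ × ℝ)) : ℝ := sInf (projDir θ '' P)

/-- Upper bound of the minimal strip containing `P` in direction `θ`. -/
noncomputable def stripEta (θ : ℝ) (P : Set (ℝ × ℝ)) : ℝ := sSup (projDir θ '' P)

/-- The strip cross-ratio pseudo-metric `d_θ` on `P`. -/
noncomputable def stripD (θ : ℝ) (P : Set (ℝ × ℝ)) (x y : ℝ × ℝ) : ℝ :=
  |Real.log (((projDir θ y - stripXi θ P) * (stripEta θ P - projDir θ x)) /
    ((projDir θ x - stripXi θ P) * (stripEta θ P - projDir θ y)))|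

namespace Stmt14Aux

lemma abs_projDir_le (θ : ℝ) (p : ℝ × ℝ) : |projDir θ p| ≤ 2 * ‖p‖ := by
  have h1 : |p.1| ≤ ‖p‖ := norm_fst_le p
  have h2 : |p.2| ≤ ‖p‖ := norm_snd_le p
  have hc : |Real.cos θ| ≤ 1 := Real.abs_cos_le_one θ
  have hs : |Real.sin θ| ≤ 1 := Real.abs_sin_le_one θ
  calc |projDir θ p| ≤ |p.1 * Real.cos θ| + |p.2 * Real.sin θ| := abs_add_le _ _
    _ ≤ ‖p‖ * 1 + ‖p‖ * 1 := by
        rw [abs_mul, abs_mul]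
        gcongr <;> positivity
    _ = 2 * ‖p‖ := by ring

variable {P : Set (ℝ × ℝ)} {C : ℝ}

lemma bddBelow_proj (hC : ∀ p ∈ P, ‖p‖ ≤ C) (θ : ℝ) : BddBelow (projDir θ '' P) := by
  refine ⟨-(2*C), ?_⟩
  rintro r ⟨p, hp, rfl⟩
  have := abs_projDir_le θ p
  have := hC p hp
  have : |projDir θ p| ≤ 2*C := by nlinarith [abs_nonneg (projDir θ p)]
  linarith [neg_abs_le (projDir θ p)]

lemma bddAbove_proj (hC : ∀ p ∈ P, ‖p‖ ≤ C) (θ : ℝ) : BddAbove (projDir θ '' P) := by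
  refine ⟨2*C, ?_⟩
  rintro r ⟨p, hp, rfl⟩
  have h1 := abs_projDir_le θ p
  have h2 := hC p hp
  have : |projDir θ p| ≤ 2*C := by nlinarith [abs_nonneg (projDir θ p)]
  linarith [le_abs_self (projDir θ p)]

lemma xi_ge (hC : ∀ p ∈ P, ‖p‖ ≤ C) (hne : P.Nonempty) (θ : ℝ) :
    -(2*C) ≤ stripXi θ P := by
  apply le_csInf (hne.image _)
  rintro r ⟨p, hp, rfl⟩
  have h1 := abs_projDir_le θ p
  have h2 := hC p hp
  have : |projDir θ p| ≤ 2*C := by nlinarith [abs_nonneg (projDir θ p)]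
  linarith [neg_abs_le (projDir θ p)]

lemma eta_le (hC : ∀ p ∈ P, ‖p‖ ≤ C) (hne : P.Nonempty) (θ : ℝ) :
    stripEta θ P ≤ 2*C := by
  apply csSup_le (hne.image _)
  rintro r ⟨p, hp, rfl⟩
  have h1 := abs_projDir_le θ p
  have h2 := hC p hp
  have : |projDir θ p| ≤ 2*C := by nlinarith [abs_nonneg (projDir θ p)]
  linarith [le_abs_self (projDir θ p)]

/-- Key inner-point bound, uniform in θ. -/
lemma proj_bounds (hC : ∀ p ∈ P, ‖p‖ ≤ C) {p : ℝ × ℝ} {ε : ℝ} (hε : 0 < ε)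
    (hball : Metric.ball p ε ⊆ P) (θ : ℝ) :
    stripXi θ P + ε/2 ≤ projDir θ p ∧ projDir θ p + ε/2 ≤ stripEta θ P := by
  set u : ℝ × ℝ := (Real.cos θ, Real.sin θ) with hu
  have hnu : ‖u‖ ≤ 1 := by
    rw [Prod.norm_def]
    simp [Real.norm_eq_abs]
    exact ⟨Real.abs_cos_le_one θ, Real.abs_sin_le_one θ⟩
  have hmem : ∀ s : ℝ, |s| ≤ ε/2 → p + s • u ∈ P := by
    intro s hs
    apply hball
    rw [Metric.mem_ball, dist_eq_norm]
    have : p + s • u - p = s • u := by abel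
    rw [this, norm_smul, Real.norm_eq_abs]
    calc |s| * ‖u‖ ≤ (ε/2) * 1 := by
          apply mul_le_mul hs hnu (norm_nonneg _) (by linarith)
      _ < ε := by linarith
  have hproj : ∀ s : ℝ, projDir θ (p + s • u) = projDir θ p + s := by
    intro s
    simp only [projDir, hu, Prod.fst_add, Prod.snd_add, Prod.smul_fst, Prod.smul_snd,
      smul_eq_mul]
    linear_combination s * Real.sin_sq_add_cos_sq θ
  constructor
  · have h1 : projDir θ (p + (-(ε/2)) • u) ∈ projDir θ '' P :=
      ⟨_, hmem _ (by rw [abs_neg, abs_of_pos (by linarith)]), rfl⟩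
    have := csInf_le (bddBelow_proj hC θ) h1
    rw [hproj] at this
    simp only [stripXi]
    linarith
  · have h1 : projDir θ (p + (ε/2) • u) ∈ projDir θ '' P :=
      ⟨_, hmem _ (by rw [abs_of_pos (by linarith)]), rfl⟩
    have := le_csSup (bddAbove_proj hC θ) h1
    rw [hproj] at this
    simp only [stripEta]
    linarith


noncomputable def G (θ : ℝ) (P : Set (ℝ × ℝ)) (p : ℝ × ℝ) : ℝ :=
  Real.log (projDir θ p - stripXi θ P) - Real.log (stripEta θ P - projDir θ p)

lemma stripD_eq_G (θ : ℝ) {x y : ℝ × ℝ}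
    (hx1 : 0 < projDir θ x - stripXi θ P) (hx2 : 0 < stripEta θ P - projDir θ x)
    (hy1 : 0 < projDir θ y - stripXi θ P) (hy2 : 0 < stripEta θ P - projDir θ y) :
    stripD θ P x y = |G θ P y - G θ P x| := by
  unfold stripD G
  rw [Real.log_div (mul_pos hy1 hx2).ne' (mul_pos hx1 hy2).ne',
    Real.log_mul hy1.ne' hx2.ne', Real.log_mul hx1.ne' hy2.ne']
  congr 1
  ring

lemma abs_log_le {a t b : ℝ} (ha : 0 < a) (h1 : a ≤ t) (h2 : t ≤ b) :
    |Real.log t| ≤ |Real.log a| + |Real.log b| := by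
  rw [abs_le]
  constructor
  · have := Real.log_le_log ha h1
    linarith [neg_abs_le (Real.log a), abs_nonneg (Real.log b)]
  · have := Real.log_le_log (ha.trans_le h1) h2
    linarith [le_abs_self (Real.log b), abs_nonneg (Real.log a)]

lemma G_bound (hC : ∀ p ∈ P, ‖p‖ ≤ C) (hne : P.Nonempty) {p : ℝ × ℝ} {ε : ℝ}
    (hε : 0 < ε) (hball : Metric.ball p ε ⊆ P) (hp : p ∈ P) (θ : ℝ) :
    |G θ P p| ≤ 2 * (|Real.log (ε/2)| + |Real.log (4*C+1)|) := by
  obtain ⟨h1, h2⟩ := proj_bounds hC hε hball θ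
  have habs : |projDir θ p| ≤ 2*C := by
    have h3 := abs_projDir_le θ p
    have h4 := hC p hp
    nlinarith [abs_nonneg (projDir θ p)]
  have hCpos : 0 ≤ C := le_trans (norm_nonneg p) (hC p hp)
  have hξ := xi_ge hC hne θ
  have hη := eta_le hC hne θ
  have b1 : |Real.log (projDir θ p - stripXi θ P)| ≤ |Real.log (ε/2)| + |Real.log (4*C+1)| := by
    apply abs_log_le (by linarith) (by linarith)
    linarith [neg_abs_le (projDir θ p), le_abs_self (projDir θ p)]
  have b2 : |Real.log (stripEta θ P - projDir θ p)| ≤ |Real.log (ε/2)| + |Real.log (4*C+1)| := by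
    apply abs_log_le (by linarith) (by linarith)
    linarith [neg_abs_le (projDir θ p), le_abs_self (projDir θ p)]
  calc |G θ P p| ≤ |Real.log (projDir θ p - stripXi θ P)| +
      |Real.log (stripEta θ P - projDir θ p)| := abs_sub _ _
    _ ≤ _ := by linarith

lemma abs_sin_sub_sin (a b : ℝ) : |Real.sin a - Real.sin b| ≤ |a - b| := by
  rw [Real.sin_sub_sin, abs_mul, abs_mul]
  have h1 : |Real.sin ((a-b)/2)| ≤ |(a-b)/2| := Real.abs_sin_le_abs
  have h2 : |Real.cos ((a+b)/2)| ≤ 1 := Real.abs_cos_le_one _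
  have h3 : |(a-b)/2| = |a-b|/2 := by rw [abs_div]; norm_num
  rw [h3] at h1
  have h4 : |(2:ℝ)| = 2 := by norm_num
  rw [h4]
  nlinarith [abs_nonneg (Real.sin ((a-b)/2)), abs_nonneg (a-b)]

lemma abs_cos_sub_cos (a b : ℝ) : |Real.cos a - Real.cos b| ≤ |a - b| := by
  rw [Real.cos_sub_cos, abs_mul, abs_mul]
  have h1 : |Real.sin ((a-b)/2)| ≤ |(a-b)/2| := Real.abs_sin_le_abs
  have h2 : |Real.sin ((a+b)/2)| ≤ 1 := Real.abs_sin_le_one _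
  have h3 : |(a-b)/2| = |a-b|/2 := by rw [abs_div]; norm_num
  rw [h3] at h1
  have h4 : |(-2:ℝ)| = 2 := by norm_num
  rw [h4]
  nlinarith [abs_nonneg (Real.sin ((a-b)/2)), abs_nonneg (a-b),
    abs_nonneg (Real.sin ((a+b)/2))]

lemma projDir_lip {p : ℝ × ℝ} (hp : ‖p‖ ≤ C) (s t : ℝ) :
    |projDir s p - projDir t p| ≤ 2*C*|s - t| := by
  have h1 : |p.1| ≤ ‖p‖ := norm_fst_le p
  have h2 : |p.2| ≤ ‖p‖ := norm_snd_le p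
  have hc := abs_cos_sub_cos s t
  have hs := abs_sin_sub_sin s t
  have key : projDir s p - projDir t p =
      p.1 * (Real.cos s - Real.cos t) + p.2 * (Real.sin s - Real.sin t) := by
    unfold projDir; ring
  rw [key]
  calc |p.1 * (Real.cos s - Real.cos t) + p.2 * (Real.sin s - Real.sin t)|
      ≤ |p.1 * (Real.cos s - Real.cos t)| + |p.2 * (Real.sin s - Real.sin t)| := abs_add_le _ _
    _ ≤ C * |s-t| + C * |s-t| := by
        rw [abs_mul, abs_mul]
        have hC0 : 0 ≤ C := le_trans (norm_nonneg p) hp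
        exact add_le_add (mul_le_mul (h1.trans hp) hc (abs_nonneg _) hC0)
          (mul_le_mul (h2.trans hp) hs (abs_nonneg _) hC0)
    _ = 2*C*|s-t| := by ring

lemma xi_lip (hC : ∀ p ∈ P, ‖p‖ ≤ C) (hne : P.Nonempty) (s t : ℝ) :
    |stripXi s P - stripXi t P| ≤ 2*C*|s - t| := by
  have key : ∀ s t : ℝ, stripXi s P - stripXi t P ≤ 2*C*|s - t| := by
    intro s t
    have h : stripXi s P - 2*C*|s-t| ≤ stripXi t P := by
      apply le_csInf (hne.image _)
      rintro r ⟨p, hp, rfl⟩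
      have h1 := projDir_lip (hC p hp) s t
      have h2 : stripXi s P ≤ projDir s p := csInf_le (bddBelow_proj hC s) ⟨p, hp, rfl⟩
      linarith [le_abs_self (projDir s p - projDir t p)]
    linarith
  rw [abs_sub_le_iff]
  refine ⟨key s t, ?_⟩
  have := key t s
  rwa [abs_sub_comm] at this

lemma eta_lip (hC : ∀ p ∈ P, ‖p‖ ≤ C) (hne : P.Nonempty) (s t : ℝ) :
    |stripEta s P - stripEta t P| ≤ 2*C*|s - t| := by
  have key : ∀ s t : ℝ, stripEta s P - stripEta t P ≤ 2*C*|s - t| := by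
    intro s t
    have h : stripEta s P ≤ stripEta t P + 2*C*|s-t| := by
      apply csSup_le (hne.image _)
      rintro r ⟨p, hp, rfl⟩
      have h1 := projDir_lip (hC p hp) s t
      have h2 : projDir t p ≤ stripEta t P := le_csSup (bddAbove_proj hC t) ⟨p, hp, rfl⟩
      linarith [le_abs_self (projDir s p - projDir t p)]
    linarith
  rw [abs_sub_le_iff]
  refine ⟨key s t, ?_⟩
  have := key t s
  rwa [abs_sub_comm] at this

lemma lip_continuous {f : ℝ → ℝ} (hf : ∀ s t : ℝ, |f s - f t| ≤ 2*C*|s - t|) :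
    Continuous f := by
  rcases le_or_gt C 0 with hC | hC
  · have : ∀ s t, f s = f t := by
      intro s t
      have := hf s t
      have h2 : 2*C*|s-t| ≤ 0 := mul_nonpos_of_nonpos_of_nonneg (by linarith) (abs_nonneg _)
      have := abs_nonneg (f s - f t)
      have : |f s - f t| = 0 := le_antisymm (by linarith) (abs_nonneg _)
      have := abs_eq_zero.mp this
      linarith
    have : f = fun _ => f 0 := funext fun s => this s 0
    rw [this]; exact continuous_const
  · apply LipschitzWith.continuous (K := (2*C).toNNReal)
    apply LipschitzWith.of_dist_le_mul
    intro a b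
    rw [Real.dist_eq, Real.dist_eq, Real.coe_toNNReal _ (by positivity)]
    exact hf a b

lemma projDir_cont (p : ℝ × ℝ) : Continuous fun θ => projDir θ p :=
  ((continuous_const.mul Real.continuous_cos).add (continuous_const.mul Real.continuous_sin))

lemma stripD_cont (hC : ∀ p ∈ P, ‖p‖ ≤ C) (hne : P.Nonempty) {a b : ℝ × ℝ} {ε : ℝ}
    (hε : 0 < ε) (ha : Metric.ball a ε ⊆ P) (hb : Metric.ball b ε ⊆ P) :
    Continuous fun θ => stripD θ P a b := by
  have hξ : Continuous fun θ => stripXi θ P := lip_continuous (xi_lip hC hne)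
  have hη : Continuous fun θ => stripEta θ P := lip_continuous (eta_lip hC hne)
  refine continuous_iff_continuousAt.mpr fun θ => ?_
  obtain ⟨ha1, ha2⟩ := proj_bounds hC hε ha θ
  obtain ⟨hb1, hb2⟩ := proj_bounds hC hε hb θ
  have hden : (projDir θ a - stripXi θ P) * (stripEta θ P - projDir θ b) ≠ 0 :=
    (mul_pos (by linarith) (by linarith)).ne'
  have hnum : (projDir θ b - stripXi θ P) * (stripEta θ P - projDir θ a) ≠ 0 :=
    (mul_pos (by linarith) (by linarith)).ne'
  have hquot : ContinuousAt (fun θ => ((projDir θ b - stripXi θ P) * (stripEta θ P - projDir θ a)) /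
      ((projDir θ a - stripXi θ P) * (stripEta θ P - projDir θ b))) θ := by
    apply ContinuousAt.div
    · exact (((projDir_cont b).sub hξ).mul (hη.sub (projDir_cont a))).continuousAt
    · exact (((projDir_cont a).sub hξ).mul (hη.sub (projDir_cont b))).continuousAt
    · exact hden
  have hval : ((projDir θ b - stripXi θ P) * (stripEta θ P - projDir θ a)) /
      ((projDir θ a - stripXi θ P) * (stripEta θ P - projDir θ b)) ≠ 0 :=
    div_ne_zero hnum hden
  exact (hquot.log hval).abs


lemma exists_theta {a b : ℝ} (h : ¬(a = 0 ∧ b = 0)) :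
    ∃ θ : ℝ, Real.cos θ = -b / Real.sqrt (a^2+b^2) ∧
      Real.sin θ = a / Real.sqrt (a^2+b^2) := by
  set r := Real.sqrt (a^2+b^2) with hrdef
  have hr2 : r^2 = a^2+b^2 := Real.sq_sqrt (by positivity)
  have hr : 0 < r := by
    apply Real.sqrt_pos.mpr
    rcases not_and_or.mp h with h' | h' <;> positivity
  have hb1 : -(1:ℝ) ≤ -b/r := by
    rw [neg_div, neg_le_neg_iff, div_le_one hr]
    nlinarith [le_abs_self b, sq_abs b, abs_nonneg b]
  have hb2 : -b/r ≤ 1 := by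
    rw [show -b/r = (-b)/r by ring, div_le_one hr]
    nlinarith [neg_abs_le b, sq_abs b, abs_nonneg b]
  have hsin : Real.sin (Real.arccos (-b/r)) = |a|/r := by
    rw [Real.sin_arccos]
    have h5 : 1 - (-b/r)^2 = a^2/r^2 := by
      field_simp
      nlinarith
    rw [h5, Real.sqrt_div (sq_nonneg a), Real.sqrt_sq_eq_abs, Real.sqrt_sq (Real.sqrt_nonneg _)]
  rcases le_or_gt 0 a with ha | ha
  · exact ⟨Real.arccos (-b/r), Real.cos_arccos hb1 hb2, by rw [hsin, abs_of_nonneg ha]⟩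
  · refine ⟨-Real.arccos (-b/r), ?_, ?_⟩
    · rw [Real.cos_neg]; exact Real.cos_arccos hb1 hb2
    · rw [Real.sin_neg, hsin, abs_of_neg ha]; ring

lemma collinear_of_det {x y z : ℝ × ℝ} (hxy : ¬(y.1 - x.1 = 0 ∧ y.2 - x.2 = 0))
    (h : (z.2-x.2)*(y.1-x.1) = (z.1-x.1)*(y.2-x.2)) :
    Collinear ℝ ({x, y, z} : Set (ℝ × ℝ)) := by
  rw [collinear_iff_of_mem (Set.mem_insert x {y, z})]
  refine ⟨y - x, ?_⟩
  rintro p (rfl | rfl | rfl)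
  · exact ⟨0, by simp⟩
  · exact ⟨1, by simp⟩
  · by_cases ha : y.1 - x.1 = 0
    · have hb : y.2 - x.2 ≠ 0 := fun hb => hxy ⟨ha, hb⟩
      refine ⟨(p.2 - x.2)/(y.2 - x.2), ?_⟩
      have h1 : p.1 - x.1 = 0 := by
        rw [ha, mul_zero] at h
        rcases mul_eq_zero.mp h.symm with h' | h'
        · exact h'
        · exact absurd h' hb
      have : ((p.2-x.2)/(y.2-x.2)) • (y - x) +ᵥ x =
          (((p.2-x.2)/(y.2-x.2)) * (y.1-x.1) + x.1,
           ((p.2-x.2)/(y.2-x.2)) * (y.2-x.2) + x.2) := rfl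
      rw [this]
      refine Prod.ext_iff.mpr ⟨?_, ?_⟩ <;> simp only
      · rw [ha, mul_zero]; linarith
      · field_simp
        ring
    · refine ⟨(p.1 - x.1)/(y.1 - x.1), ?_⟩
      have : ((p.1-x.1)/(y.1-x.1)) • (y - x) +ᵥ x =
          (((p.1-x.1)/(y.1-x.1)) * (y.1-x.1) + x.1,
           ((p.1-x.1)/(y.1-x.1)) * (y.2-x.2) + x.2) := rfl
      rw [this]
      refine Prod.ext_iff.mpr ⟨?_, ?_⟩ <;> simp only
      · field_simp
        ring
      · field_simp
        linear_combination h

lemma G_lt (θ : ℝ) {p q : ℝ × ℝ}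
    (hp1 : 0 < projDir θ p - stripXi θ P) (hp2 : 0 < stripEta θ P - projDir θ p)
    (hq2 : 0 < stripEta θ P - projDir θ q)
    (hlt : projDir θ p < projDir θ q) : G θ P p < G θ P q := by
  unfold G
  have l1 := Real.log_lt_log hp1 (by linarith : projDir θ p - stripXi θ P < projDir θ q - stripXi θ P)
  have l2 := Real.log_lt_log hq2 (by linarith : stripEta θ P - projDir θ q < stripEta θ P - projDir θ p)
  linarith

end Stmt14Aux

theorem stmt_14 (P : Set (ℝ × ℝ)) (hPo : IsOpen P) (hPb : Bornology.IsBounded P)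
    (hPconv : Convex ℝ P) (hPne : P.Nonempty)
    (θi : ℕ → ℝ) (hdense : Dense (Set.range θi))
    (w : ℕ → ℝ) (hw : ∀ i, 0 < w i) (hsum : Summable w)
    (x y z : ℝ × ℝ) (hx : x ∈ P) (hy : y ∈ P) (hz : z ∈ P)
    (hncol : ¬ Collinear ℝ ({x, y, z} : Set (ℝ × ℝ))) :
    (∑' i, w i * stripD (θi i) P x y) <
      (∑' i, w i * stripD (θi i) P x z) + ∑' i, w i * stripD (θi i) P z y := by
  classical
  obtain ⟨C, hC⟩ := isBounded_iff_forall_norm_le.mp hPb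
  obtain ⟨εx, hεx, hbx⟩ := Metric.isOpen_iff.mp hPo x hx
  obtain ⟨εy, hεy, hby⟩ := Metric.isOpen_iff.mp hPo y hy
  obtain ⟨εz, hεz, hbz⟩ := Metric.isOpen_iff.mp hPo z hz
  set ε := min εx (min εy εz) with hεdef
  have hε0 : 0 < ε := lt_min hεx (lt_min hεy hεz)
  have hbx' : Metric.ball x ε ⊆ P :=
    (Metric.ball_subset_ball (min_le_left _ _)).trans hbx
  have hby' : Metric.ball y ε ⊆ P :=
    (Metric.ball_subset_ball ((min_le_right _ _).trans (min_le_left _ _))).trans hby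
  have hbz' : Metric.ball z ε ⊆ P :=
    (Metric.ball_subset_ball ((min_le_right _ _).trans (min_le_right _ _))).trans hbz
  have posx : ∀ θ, 0 < projDir θ x - stripXi θ P ∧ 0 < stripEta θ P - projDir θ x := by
    intro θ
    obtain ⟨h1, h2⟩ := Stmt14Aux.proj_bounds hC hε0 hbx' θ
    exact ⟨by linarith, by linarith⟩
  have posy : ∀ θ, 0 < projDir θ y - stripXi θ P ∧ 0 < stripEta θ P - projDir θ y := by
    intro θ
    obtain ⟨h1, h2⟩ := Stmt14Aux.proj_bounds hC hε0 hby' θ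
    exact ⟨by linarith, by linarith⟩
  have posz : ∀ θ, 0 < projDir θ z - stripXi θ P ∧ 0 < stripEta θ P - projDir θ z := by
    intro θ
    obtain ⟨h1, h2⟩ := Stmt14Aux.proj_bounds hC hε0 hbz' θ
    exact ⟨by linarith, by linarith⟩
  -- triangle inequality for each direction
  have tri : ∀ θ, stripD θ P x y ≤ stripD θ P x z + stripD θ P z y := by
    intro θ
    rw [Stmt14Aux.stripD_eq_G θ (posx θ).1 (posx θ).2 (posy θ).1 (posy θ).2,
        Stmt14Aux.stripD_eq_G θ (posx θ).1 (posx θ).2 (posz θ).1 (posz θ).2,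
        Stmt14Aux.stripD_eq_G θ (posz θ).1 (posz θ).2 (posy θ).1 (posy θ).2]
    rw [add_comm]
    exact abs_sub_le _ _ _
  -- uniform bound
  set M := 2 * (2 * (|Real.log (ε/2)| + |Real.log (4*C+1)|)) with hM
  have bound : ∀ (a b : ℝ × ℝ), a ∈ P → b ∈ P → Metric.ball a ε ⊆ P →
      Metric.ball b ε ⊆ P → ∀ θ, stripD θ P a b ≤ M := by
    intro a b hA hB hbA hbB θ
    obtain ⟨h1, h2⟩ := Stmt14Aux.proj_bounds hC hε0 hbA θ
    obtain ⟨h3, h4⟩ := Stmt14Aux.proj_bounds hC hε0 hbB θ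
    rw [Stmt14Aux.stripD_eq_G θ (by linarith) (by linarith) (by linarith) (by linarith)]
    have g1 := Stmt14Aux.G_bound hC hPne hε0 hbA hA θ
    have g2 := Stmt14Aux.G_bound hC hPne hε0 hbB hB θ
    calc |Stmt14Aux.G θ P b - Stmt14Aux.G θ P a|
        ≤ |Stmt14Aux.G θ P b| + |Stmt14Aux.G θ P a| := abs_sub _ _
      _ ≤ M := by rw [hM]; linarith
  -- summability
  have nonneg : ∀ (a b : ℝ × ℝ) (i : ℕ), 0 ≤ w i * stripD (θi i) P a b :=
    fun a b i => mul_nonneg (hw i).le (abs_nonneg _)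
  have sxz : Summable (fun i => w i * stripD (θi i) P x z) := by
    apply Summable.of_nonneg_of_le (nonneg x z)
      (fun i => mul_le_mul_of_nonneg_left (bound x z hx hz hbx' hbz' _) (hw i).le)
    exact hsum.mul_right M
  have szy : Summable (fun i => w i * stripD (θi i) P z y) := by
    apply Summable.of_nonneg_of_le (nonneg z y)
      (fun i => mul_le_mul_of_nonneg_left (bound z y hz hy hbz' hby' _) (hw i).le)
    exact hsum.mul_right M
  -- x ≠ y
  have hxy : ¬(y.1 - x.1 = 0 ∧ y.2 - x.2 = 0) := by
    rintro ⟨h1, h2⟩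
    have hyx : y = x := Prod.ext_iff.mpr ⟨by linarith, by linarith⟩
    apply hncol
    rw [hyx, Set.insert_comm, Set.insert_idem]
    exact collinear_pair ℝ x z
  -- the special direction
  obtain ⟨θ₀, hcos, hsin⟩ := Stmt14Aux.exists_theta hxy
  set r := Real.sqrt ((y.1-x.1)^2 + (y.2-x.2)^2) with hrdef
  have hr : 0 < r := by
    apply Real.sqrt_pos.mpr
    rcases not_and_or.mp hxy with h' | h' <;> positivity
  have hpxy : projDir θ₀ y = projDir θ₀ x := by
    unfold projDir
    rw [hcos, hsin]
    field_simp
    ring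
  have hpz : projDir θ₀ z ≠ projDir θ₀ x := by
    intro hcontra
    apply hncol
    apply Stmt14Aux.collinear_of_det hxy
    unfold projDir at hcontra
    rw [hcos, hsin] at hcontra
    field_simp at hcontra
    linarith
  -- strict inequality at θ₀
  have hstrict : stripD θ₀ P x y < stripD θ₀ P x z + stripD θ₀ P z y := by
    rw [Stmt14Aux.stripD_eq_G θ₀ (posx θ₀).1 (posx θ₀).2 (posy θ₀).1 (posy θ₀).2,
        Stmt14Aux.stripD_eq_G θ₀ (posx θ₀).1 (posx θ₀).2 (posz θ₀).1 (posz θ₀).2,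
        Stmt14Aux.stripD_eq_G θ₀ (posz θ₀).1 (posz θ₀).2 (posy θ₀).1 (posy θ₀).2]
    have hGxy : Stmt14Aux.G θ₀ P y = Stmt14Aux.G θ₀ P x := by
      unfold Stmt14Aux.G; rw [hpxy]
    have hGz : Stmt14Aux.G θ₀ P z ≠ Stmt14Aux.G θ₀ P x := by
      rcases lt_or_gt_of_ne hpz with h | h
      · exact ne_of_lt (Stmt14Aux.G_lt θ₀ (posz θ₀).1 (posz θ₀).2 (posx θ₀).2 h)
      · exact ne_of_gt (Stmt14Aux.G_lt θ₀ (posx θ₀).1 (posx θ₀).2 (posz θ₀).2 h)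
    rw [hGxy, sub_self, abs_zero]
    have h1 : 0 < |Stmt14Aux.G θ₀ P z - Stmt14Aux.G θ₀ P x| :=
      abs_pos.mpr (sub_ne_zero.mpr hGz)
    have h2 : |Stmt14Aux.G θ₀ P x - Stmt14Aux.G θ₀ P z| =
        |Stmt14Aux.G θ₀ P z - Stmt14Aux.G θ₀ P x| := abs_sub_comm _ _
    linarith
  -- continuity and density give a strict index
  have hcont : ContinuousAt
      (fun θ => stripD θ P x z + stripD θ P z y - stripD θ P x y) θ₀ := by
    exact (((Stmt14Aux.stripD_cont hC hPne hε0 hbx' hbz').add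
      (Stmt14Aux.stripD_cont hC hPne hε0 hbz' hby')).sub
      (Stmt14Aux.stripD_cont hC hPne hε0 hbx' hby')).continuousAt
  have hpos0 : 0 < stripD θ₀ P x z + stripD θ₀ P z y - stripD θ₀ P x y := by linarith
  have hev : ∀ᶠ θ in nhds θ₀, 0 < stripD θ P x z + stripD θ P z y - stripD θ P x y :=
    hcont.eventually (eventually_gt_nhds hpos0)
  obtain ⟨θ', hθ'⟩ := mem_closure_iff_nhds.mp (hdense θ₀) _ hev
  obtain ⟨hθ'pos, i₀, rfl⟩ := hθ'
  have hi : w i₀ * stripD (θi i₀) P x y <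
      w i₀ * (stripD (θi i₀) P x z + stripD (θi i₀) P z y) := by
    apply mul_lt_mul_of_pos_left _ (hw i₀)
    have : (0:ℝ) < stripD (θi i₀) P x z + stripD (θi i₀) P z y - stripD (θi i₀) P x y := hθ'pos
    linarith
  have hsumg : Summable (fun i => w i * (stripD (θi i) P x z + stripD (θi i) P z y)) := by
    simpa [mul_add] using sxz.add szy
  calc (∑' i, w i * stripD (θi i) P x y)
      < ∑' i, w i * (stripD (θi i) P x z + stripD (θi i) P z y) :=
        Summable.tsum_lt_tsum_of_nonneg (nonneg x y)
          (fun i => mul_le_mul_of_nonneg_left (tri _) (hw i).le) hi hsumg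
    _ = _ := by
        simp only [mul_add]
        exact Summable.tsum_add sxz szy
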